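/- arXiv:2212.05678 — 3 statements merged into one kernel-verified Lean document; each statement's English description precedes it below -/
import Mathlib

section
/- For f ∈ L¹(ℝ), the SAFT intertwines A-translation with modulation: 𝓕_A(T^A_x f)(ω) = ρ_A(x) e^{-ixω/b} 𝓕_A f(ω) for all x, ω ∈ ℝ. -/
open MeasureTheory

/-- The special affine Fourier transform with parameter set `A = {a,b,c,d,p,q}`. -/
noncomputable def saft (a b d p q : ℝ) (f : ℝ → ℂ) (ω : ℝ) : ℂ :=
  (Real.sqrt (2 * Real.pi * |b|) : ℂ)⁻¹ *
    ∫ t : ℝ, f t * Complex.exp (Complex.I / (2 * (b : ℂ)) *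
      ((a * t ^ 2 + 2 * p * t - 2 * t * ω + d * ω ^ 2 + 2 * (b * q - d * p) * ω : ℝ) : ℂ))

/-- The `A`-translation `T^A_x f(t) = e^{-i(a/b)x(t-x)} f(t-x)`. -/
noncomputable def Atrans (a b x : ℝ) (f : ℝ → ℂ) (t : ℝ) : ℂ :=
  Complex.exp (-Complex.I * ((a : ℂ) / b) * x * ((t : ℂ) - x)) * f (t - x)

/-- `ρ_A(t) = exp(i/(2b)(at² + 2pt))`. -/
noncomputable def rhoA (a b p t : ℝ) : ℂ :=
  Complex.exp (Complex.I / (2 * (b : ℂ)) * ((a * t ^ 2 + 2 * p * t : ℝ) : ℂ))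

/-- The SAFT intertwines `A`-translation with modulation. -/
theorem saft_Atrans (a b c d p q : ℝ) (hb : b ≠ 0) (hA : a * d - b * c = 1)
    (f : ℝ → ℂ) (hf : Integrable f) (x ω : ℝ) :
    saft a b d p q (Atrans a b x f) ω =
      rhoA a b p x * Complex.exp (-Complex.I * x * ω / b) * saft a b d p q f ω := by
  have hb' : (b : ℂ) ≠ 0 := Complex.ofReal_ne_zero.mpr hb
  unfold saft Atrans rhoA
  have h2 : (∫ t : ℝ, Atrans a b x f t * Complex.exp (Complex.I / (2 * (b : ℂ)) *
        ((a * t ^ 2 + 2 * p * t - 2 * t * ω + d * ω ^ 2 + 2 * (b * q - d * p) * ω : ℝ) : ℂ)))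
      = ∫ t : ℝ, Atrans a b x f (t + x) * Complex.exp (Complex.I / (2 * (b : ℂ)) *
        ((a * (t + x) ^ 2 + 2 * p * (t + x) - 2 * (t + x) * ω + d * ω ^ 2 +
          2 * (b * q - d * p) * ω : ℝ) : ℂ)) :=
    (integral_add_right_eq_self (fun t : ℝ => Atrans a b x f t *
      Complex.exp (Complex.I / (2 * (b : ℂ)) *
        ((a * t ^ 2 + 2 * p * t - 2 * t * ω + d * ω ^ 2 +
          2 * (b * q - d * p) * ω : ℝ) : ℂ))) x).symm
  unfold Atrans at h2
  rw [h2]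
  have key : ∀ t : ℝ,
      Complex.exp (-Complex.I * ((a : ℂ) / b) * x * ((↑(t + x) : ℂ) - x)) * f (t + x - x) *
        Complex.exp (Complex.I / (2 * (b : ℂ)) *
          ((a * (t + x) ^ 2 + 2 * p * (t + x) - 2 * (t + x) * ω + d * ω ^ 2 +
            2 * (b * q - d * p) * ω : ℝ) : ℂ))
      = (Complex.exp (Complex.I / (2 * (b : ℂ)) * ((a * x ^ 2 + 2 * p * x : ℝ) : ℂ)) *
          Complex.exp (-Complex.I * x * ω / b)) *
        (f t * Complex.exp (Complex.I / (2 * (b : ℂ)) *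
          ((a * t ^ 2 + 2 * p * t - 2 * t * ω + d * ω ^ 2 +
            2 * (b * q - d * p) * ω : ℝ) : ℂ))) := by
    intro t
    rw [add_sub_cancel_right]
    have hexp : (-Complex.I * ((a : ℂ) / b) * x * ((↑(t + x) : ℂ) - x)) +
        Complex.I / (2 * (b : ℂ)) *
          ((a * (t + x) ^ 2 + 2 * p * (t + x) - 2 * (t + x) * ω + d * ω ^ 2 +
            2 * (b * q - d * p) * ω : ℝ) : ℂ)
        = (Complex.I / (2 * (b : ℂ)) * ((a * x ^ 2 + 2 * p * x : ℝ) : ℂ) +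
            -Complex.I * x * ω / b) +
          Complex.I / (2 * (b : ℂ)) *
            ((a * t ^ 2 + 2 * p * t - 2 * t * ω + d * ω ^ 2 +
              2 * (b * q - d * p) * ω : ℝ) : ℂ) := by
      push_cast
      field_simp
      ring
    calc Complex.exp (-Complex.I * ((a : ℂ) / b) * x * ((↑(t + x) : ℂ) - x)) * f t *
          Complex.exp (Complex.I / (2 * (b : ℂ)) *
            ((a * (t + x) ^ 2 + 2 * p * (t + x) - 2 * (t + x) * ω + d * ω ^ 2 +
              2 * (b * q - d * p) * ω : ℝ) : ℂ))
        = f t * Complex.exp ((-Complex.I * ((a : ℂ) / b) * x * ((↑(t + x) : ℂ) - x)) +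
            Complex.I / (2 * (b : ℂ)) *
              ((a * (t + x) ^ 2 + 2 * p * (t + x) - 2 * (t + x) * ω + d * ω ^ 2 +
                2 * (b * q - d * p) * ω : ℝ) : ℂ)) := by rw [Complex.exp_add]; ring
      _ = _ := by rw [hexp, Complex.exp_add, Complex.exp_add]; ring
  simp_rw [key]
  rw [MeasureTheory.integral_const_mul]
  ring
end

section
/- The A-convolution satisfies the convolution theorem: for μ ∈ M(ℝ) and f ∈ L¹(ℝ), 𝓕_A(μ ⋆_A f)(ω) = η̄_A(ω) 𝓕_A μ(ω) 𝓕_A f(ω). -/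
open MeasureTheory

/-- Integral of a complex-valued function against a complex (bounded regular Borel) measure,
via the Jordan decompositions of its real and imaginary parts. -/
noncomputable def integCM (μ : ComplexMeasure ℝ) (f : ℝ → ℂ) : ℂ :=
  ((∫ t, f t ∂(ComplexMeasure.re μ).toJordanDecomposition.posPart) -
      ∫ t, f t ∂(ComplexMeasure.re μ).toJordanDecomposition.negPart) +
    Complex.I * ((∫ t, f t ∂(ComplexMeasure.im μ).toJordanDecomposition.posPart) -
      ∫ t, f t ∂(ComplexMeasure.im μ).toJordanDecomposition.negPart)

/-- The SAFT of a complex measure. -/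
noncomputable def saftCM (a b d p q : ℝ) (μ : ComplexMeasure ℝ) (ω : ℝ) : ℂ :=
  (Real.sqrt (2 * Real.pi * |b|) : ℂ)⁻¹ *
    integCM μ (fun t => Complex.exp (Complex.I / (2 * (b : ℂ)) *
      ((a * t ^ 2 + 2 * p * t - 2 * t * ω + d * ω ^ 2 + 2 * (b * q - d * p) * ω : ℝ) : ℂ)))

/-- The `A`-convolution of a complex measure and a function. -/
noncomputable def convMA (a b : ℝ) (μ : ComplexMeasure ℝ) (f : ℝ → ℂ) (t : ℝ) : ℂ :=
  (Real.sqrt (2 * Real.pi * |b|) : ℂ)⁻¹ * integCM μ (fun s => Atrans a b s f t)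

/-- `η_A(ω) = exp(i/(2b)(dω² + 2(bq - dp)ω))`. -/
noncomputable def etaA (b d p q ω : ℝ) : ℂ :=
  Complex.exp (Complex.I / (2 * (b : ℂ)) * ((d * ω ^ 2 + 2 * (b * q - d * p) * ω : ℝ) : ℂ))

/-! ### Auxiliary material -/

/-- The SAFT phase factor. -/
noncomputable def ph (a b d p q ω : ℝ) (t : ℝ) : ℂ :=
  Complex.exp (Complex.I / (2 * (b : ℂ)) *
    ((a * t ^ 2 + 2 * p * t - 2 * t * ω + d * ω ^ 2 + 2 * (b * q - d * p) * ω : ℝ) : ℂ))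

lemma ph_eq (a b d p q ω t : ℝ) :
    ph a b d p q ω t = Complex.exp
      (((a * t ^ 2 + 2 * p * t - 2 * t * ω + d * ω ^ 2 + 2 * (b * q - d * p) * ω) / (2 * b) : ℝ)
        * Complex.I) := by
  unfold ph; congr 1; push_cast; ring

lemma norm_ph (a b d p q ω t : ℝ) : ‖ph a b d p q ω t‖ = 1 := by
  rw [ph_eq, Complex.norm_exp_ofReal_mul_I]

lemma continuous_ph (a b d p q ω : ℝ) : Continuous (ph a b d p q ω) := by
  unfold ph; fun_prop

lemma norm_Atrans_mul_ph (a b d p q ω : ℝ) (f : ℝ → ℂ) (s t : ℝ) :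
    ‖Atrans a b s f t * ph a b d p q ω t‖ = ‖f (t - s)‖ := by
  have h : -Complex.I * ((a : ℂ) / b) * s * ((t : ℂ) - s) =
      ((-(a / b * s * (t - s)) : ℝ) : ℂ) * Complex.I := by push_cast; ring
  rw [Atrans, norm_mul, norm_mul, h, norm_ph,
    Complex.norm_exp_ofReal_mul_I, one_mul, mul_one]

lemma conj_etaA (b d p q ω : ℝ) :
    (starRingEnd ℂ) (etaA b d p q ω) =
      Complex.exp (-(Complex.I / (2 * (b : ℂ))) *
        ((d * ω ^ 2 + 2 * (b * q - d * p) * ω : ℝ) : ℂ)) := by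
  unfold etaA
  rw [← Complex.exp_conj]
  congr 1
  have h2 : 2 * (b : ℂ) = ((2 * b : ℝ) : ℂ) := by push_cast; ring
  rw [h2, map_mul, map_div₀, Complex.conj_I, Complex.conj_ofReal, Complex.conj_ofReal]
  ring

lemma phase (a b d p q : ℝ) (hb : b ≠ 0) (ω s u : ℝ) :
    Complex.exp (-Complex.I * ((a : ℂ) / b) * s * u) * ph a b d p q ω (u + s) =
      (starRingEnd ℂ) (etaA b d p q ω) * ph a b d p q ω s * ph a b d p q ω u := by
  have hb' : (b : ℂ) ≠ 0 := by exact_mod_cast hb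
  rw [conj_etaA]
  unfold ph
  rw [← Complex.exp_add, ← Complex.exp_add, ← Complex.exp_add]
  congr 1
  push_cast
  field_simp
  ring

/-- Inner integral evaluation via translation invariance and the phase identity. -/
lemma inner_int (a b d p q : ℝ) (hb : b ≠ 0) (ω : ℝ) (f : ℝ → ℂ) (s : ℝ) :
    ∫ t, Atrans a b s f t * ph a b d p q ω t =
      (starRingEnd ℂ) (etaA b d p q ω) * ph a b d p q ω s * ∫ u, f u * ph a b d p q ω u := by
  rw [← integral_add_right_eq_self (fun t => Atrans a b s f t * ph a b d p q ω t) s]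
  have h : ∀ u : ℝ, Atrans a b s f (u + s) * ph a b d p q ω (u + s) =
      ((starRingEnd ℂ) (etaA b d p q ω) * ph a b d p q ω s) * (f u * ph a b d p q ω u) := by
    intro u
    have h1 : ((u + s : ℝ) : ℂ) - (s : ℂ) = (u : ℂ) := by push_cast; ring
    rw [Atrans, h1, add_sub_cancel_right]
    calc Complex.exp (-Complex.I * ((a : ℂ) / b) * s * u) * f u * ph a b d p q ω (u + s)
        = (Complex.exp (-Complex.I * ((a : ℂ) / b) * s * u) * ph a b d p q ω (u + s)) * f u := by
          ring
      _ = ((starRingEnd ℂ) (etaA b d p q ω) * ph a b d p q ω s) * (f u * ph a b d p q ω u) := by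
          rw [phase a b d p q hb ω s u]; ring
  simp only [h]
  rw [MeasureTheory.integral_const_mul]

lemma intF (a b d p q ω : ℝ) (f : ℝ → ℂ) (hf : Integrable f)
    (ν : Measure ℝ) [IsFiniteMeasure ν] :
    Integrable (fun z : ℝ × ℝ => Atrans a b z.1 f z.2 * ph a b d p q ω z.2) (ν.prod volume) := by
  obtain ⟨g, hg, hfg⟩ := hf.aestronglyMeasurable
  have hM : volume {x : ℝ | f x ≠ g x} = 0 := by
    simpa [Filter.EventuallyEq, ae_iff] using hfg
  obtain ⟨N, hMN, hNmeas, hN0⟩ := exists_measurable_superset_of_null hM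
  have hprod : (ν.prod volume) {z : ℝ × ℝ | z.2 - z.1 ∈ N} = 0 := by
    have hmeas : MeasurableSet {z : ℝ × ℝ | z.2 - z.1 ∈ N} :=
      (measurable_snd.sub measurable_fst) hNmeas
    rw [MeasureTheory.Measure.prod_apply hmeas]
    have hz : ∀ s : ℝ, volume (Prod.mk s ⁻¹' {z : ℝ × ℝ | z.2 - z.1 ∈ N}) = 0 := by
      intro s
      have he : Prod.mk s ⁻¹' {z : ℝ × ℝ | z.2 - z.1 ∈ N} = (fun t => t + -s) ⁻¹' N := by
        ext t; simp [sub_eq_add_neg]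
      rw [he, measure_preimage_add_right]
      exact hN0
    have hz' : ∀ x : ℝ, volume {t : ℝ | t - x ∈ N} = 0 := hz
    simp [hz']
  have haesm_f : AEStronglyMeasurable (fun z : ℝ × ℝ => f (z.2 - z.1)) (ν.prod volume) := by
    refine ⟨fun z => g (z.2 - z.1), hg.comp_measurable (measurable_snd.sub measurable_fst), ?_⟩
    refine (MeasureTheory.ae_iff).2 (measure_mono_null ?_ hprod)
    intro z hz
    exact hMN hz
  have hcont : Continuous (fun z : ℝ × ℝ =>
      Complex.exp (-Complex.I * ((a : ℂ) / b) * z.1 * ((z.2 : ℂ) - z.1)) *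
        ph a b d p q ω z.2) := by
    refine Continuous.mul (by fun_prop) ((continuous_ph a b d p q ω).comp continuous_snd)
  have hrwF : (fun z : ℝ × ℝ => Atrans a b z.1 f z.2 * ph a b d p q ω z.2) =
      fun z : ℝ × ℝ => (Complex.exp (-Complex.I * ((a : ℂ) / b) * z.1 * ((z.2 : ℂ) - z.1)) *
        ph a b d p q ω z.2) * f (z.2 - z.1) := by
    funext z; rw [Atrans]; ring
  have haesmF : AEStronglyMeasurable
      (fun z : ℝ × ℝ => Atrans a b z.1 f z.2 * ph a b d p q ω z.2) (ν.prod volume) := by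
    rw [hrwF]; exact hcont.aestronglyMeasurable.mul haesm_f
  rw [MeasureTheory.integrable_prod_iff haesmF]
  constructor
  · refine Filter.Eventually.of_forall fun s => ?_
    have h1 : Integrable (fun t => f (t - s)) volume := hf.comp_sub_right s
    refine Integrable.mono' h1.norm ?_ ?_
    · have hc : Continuous (fun t : ℝ =>
          Complex.exp (-Complex.I * ((a : ℂ) / b) * s * ((t : ℂ) - s)) * ph a b d p q ω t) := by
        refine Continuous.mul (by fun_prop) (continuous_ph a b d p q ω)
      have hr : (fun t => Atrans a b s f t * ph a b d p q ω t) =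
          fun t : ℝ => (Complex.exp (-Complex.I * ((a : ℂ) / b) * s * ((t : ℂ) - s)) *
            ph a b d p q ω t) * f (t - s) := by
        funext t; rw [Atrans]; ring
      rw [hr]
      exact hc.aestronglyMeasurable.mul h1.aestronglyMeasurable
    · exact Filter.Eventually.of_forall fun t =>
        le_of_eq (norm_Atrans_mul_ph a b d p q ω f s t)
  · have hr : (fun s => ∫ t, ‖Atrans a b s f t * ph a b d p q ω t‖) =
        fun _ : ℝ => ∫ t, ‖f t‖ := by
      funext s
      simp only [norm_Atrans_mul_ph]
      exact integral_sub_right_eq_self (fun t => ‖f t‖) s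
    rw [hr]
    exact integrable_const _

lemma keyν (a b d p q : ℝ) (hb : b ≠ 0) (ω : ℝ) (f : ℝ → ℂ) (hf : Integrable f)
    (ν : Measure ℝ) [IsFiniteMeasure ν] :
    Integrable (fun t => (∫ s, Atrans a b s f t ∂ν) * ph a b d p q ω t) volume ∧
    ∫ t, (∫ s, Atrans a b s f t ∂ν) * ph a b d p q ω t =
      (starRingEnd ℂ) (etaA b d p q ω) * (∫ u, f u * ph a b d p q ω u) * ∫ s, ph a b d p q ω s ∂ν := by
  have hF := intF a b d p q ω f hf ν
  have hrw : (fun t => (∫ s, Atrans a b s f t ∂ν) * ph a b d p q ω t) =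
      fun t => ∫ s, Atrans a b s f t * ph a b d p q ω t ∂ν := by
    funext t
    exact (MeasureTheory.integral_mul_const _ _).symm
  constructor
  · rw [hrw]
    exact hF.integral_prod_right
  · rw [hrw, ← MeasureTheory.integral_integral_swap hF]
    have h2 : ∀ s : ℝ, (∫ t, Atrans a b s f t * ph a b d p q ω t) =
        ((starRingEnd ℂ) (etaA b d p q ω) * (∫ u, f u * ph a b d p q ω u)) *
          ph a b d p q ω s := by
      intro s
      rw [inner_int a b d p q hb ω f s]; ring
    simp only [h2]
    rw [MeasureTheory.integral_const_mul]

/-- Convolution theorem for the SAFT: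
`𝓕_A(μ ⋆_A f) = conj(η_A) ⋅ 𝓕_A μ ⋅ 𝓕_A f`. -/
theorem saft_convMA (a b c d p q : ℝ) (hb : b ≠ 0) (hA : a * d - b * c = 1)
    (μ : ComplexMeasure ℝ) (f : ℝ → ℂ) (hf : Integrable f) (ω : ℝ) :
    saft a b d p q (convMA a b μ f) ω =
      (starRingEnd ℂ) (etaA b d p q ω) * saftCM a b d p q μ ω * saft a b d p q f ω := by
  have k1 := keyν a b d p q hb ω f hf (ComplexMeasure.re μ).toJordanDecomposition.posPart
  have k2 := keyν a b d p q hb ω f hf (ComplexMeasure.re μ).toJordanDecomposition.negPart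
  have k3 := keyν a b d p q hb ω f hf (ComplexMeasure.im μ).toJordanDecomposition.posPart
  have k4 := keyν a b d p q hb ω f hf (ComplexMeasure.im μ).toJordanDecomposition.negPart
  have expand : (fun t => convMA a b μ f t * ph a b d p q ω t) =
      fun t => ((Real.sqrt (2 * Real.pi * |b|) : ℂ))⁻¹ *
        ((((∫ s, Atrans a b s f t ∂(ComplexMeasure.re μ).toJordanDecomposition.posPart) *
              ph a b d p q ω t -
            (∫ s, Atrans a b s f t ∂(ComplexMeasure.re μ).toJordanDecomposition.negPart) *
              ph a b d p q ω t) +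
          Complex.I *
            ((∫ s, Atrans a b s f t ∂(ComplexMeasure.im μ).toJordanDecomposition.posPart) *
                ph a b d p q ω t -
              (∫ s, Atrans a b s f t ∂(ComplexMeasure.im μ).toJordanDecomposition.negPart) *
                ph a b d p q ω t))) := by
    funext t
    rw [convMA, integCM]
    ring
  have hL : saft a b d p q (convMA a b μ f) ω =
      ((Real.sqrt (2 * Real.pi * |b|) : ℂ))⁻¹ *
        ∫ t, convMA a b μ f t * ph a b d p q ω t := rfl
  have hR1 : saft a b d p q f ω =
      ((Real.sqrt (2 * Real.pi * |b|) : ℂ))⁻¹ * ∫ u, f u * ph a b d p q ω u := rfl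
  have hR2 : saftCM a b d p q μ ω =
      ((Real.sqrt (2 * Real.pi * |b|) : ℂ))⁻¹ *
        (((∫ s, ph a b d p q ω s ∂(ComplexMeasure.re μ).toJordanDecomposition.posPart) -
            ∫ s, ph a b d p q ω s ∂(ComplexMeasure.re μ).toJordanDecomposition.negPart) +
          Complex.I *
            ((∫ s, ph a b d p q ω s ∂(ComplexMeasure.im μ).toJordanDecomposition.posPart) -
              ∫ s, ph a b d p q ω s ∂(ComplexMeasure.im μ).toJordanDecomposition.negPart)) := rfl
  have h12 : Integrable (fun t =>
      (∫ s, Atrans a b s f t ∂(ComplexMeasure.re μ).toJordanDecomposition.posPart) *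
          ph a b d p q ω t -
        (∫ s, Atrans a b s f t ∂(ComplexMeasure.re μ).toJordanDecomposition.negPart) *
          ph a b d p q ω t) volume := k1.1.sub k2.1
  have h34 : Integrable (fun t => Complex.I *
      ((∫ s, Atrans a b s f t ∂(ComplexMeasure.im μ).toJordanDecomposition.posPart) *
          ph a b d p q ω t -
        (∫ s, Atrans a b s f t ∂(ComplexMeasure.im μ).toJordanDecomposition.negPart) *
          ph a b d p q ω t)) volume := (k3.1.sub k4.1).const_mul Complex.I
  rw [hL, expand, MeasureTheory.integral_const_mul,
    MeasureTheory.integral_add h12 h34,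
    MeasureTheory.integral_sub k1.1 k2.1, MeasureTheory.integral_const_mul,
    MeasureTheory.integral_sub k3.1 k4.1, k1.2, k2.2, k3.2, k4.2, hR1, hR2]
  ring
end

section
/- If {T^A_k φ : k ∈ ℤ} is a frame for its closed linear span V_A(φ) with frame operator S, then S commutes with each T^A_k, and consequently the canonical dual frame is {T^A_k S^{-1}φ : k ∈ ℤ}, i.e., the dual frame elements are A-translates of the single function S^{-1}φ. -/
open MeasureTheory

/-- Composition of two `A`-translations is a phase times the `A`-translation by the sum. -/
lemma Atrans_comp (a b x y : ℝ) (f : ℝ → ℂ) (t : ℝ) :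
    Atrans a b x (Atrans a b y f) t
      = Complex.exp (-Complex.I * ((a : ℂ) / b) * x * y) * Atrans a b (x + y) f t := by
  simp only [Atrans]
  rw [show t - x - y = t - (x + y) by ring]
  rw [← mul_assoc, ← Complex.exp_add, ← mul_assoc, ← Complex.exp_add]
  congr 2
  push_cast
  ring

/-- `Atrans` respects a.e. equality. -/
lemma Atrans_congr_ae (a b x : ℝ) {f g : ℝ → ℂ} (h : f =ᵐ[volume] g) :
    Atrans a b x f =ᵐ[volume] Atrans a b x g := by
  have h2 : (f ∘ fun t : ℝ => t - x) =ᵐ[volume] (g ∘ fun t : ℝ => t - x) :=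
    (measurePreserving_sub_right volume x).quasiMeasurePreserving.ae_eq_comp h
  filter_upwards [h2] with t ht
  simp only [Function.comp] at ht
  simp only [Atrans, ht]

lemma conj_phase_mul_self (z : ℂ) (hz : (starRingEnd ℂ) z = -z) :
    (starRingEnd ℂ) (Complex.exp z) * Complex.exp z = 1 := by
  rw [← Complex.exp_conj, ← Complex.exp_add, hz, neg_add_cancel, Complex.exp_zero]

lemma conj_phase (a b : ℝ) (u v : ℂ) (hu : (starRingEnd ℂ) u = u) (hv : (starRingEnd ℂ) v = v) :
    (starRingEnd ℂ) (-Complex.I * ((a : ℂ) / b) * u * v)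
      = -(-Complex.I * ((a : ℂ) / b) * u * v) := by
  simp only [map_mul, map_neg, Complex.conj_I, map_div₀, Complex.conj_ofReal, hu, hv]
  ring

/-- If `{T^A_k φ}_{k∈ℤ}` is a frame for its closed span `V_A(φ)` with frame operator `S`,
then `S` commutes with every `T^A_k`, and the canonical dual frame consists of the
`A`-translates `{T^A_k S⁻¹φ}` of the single function `S⁻¹φ`. -/
theorem dual_frame_of_Atrans (a b : ℝ) (hb : b ≠ 0)
    (φ : Lp ℂ 2 (volume : Measure ℝ))
    (Tk : ℤ → (Lp ℂ 2 (volume : Measure ℝ) →L[ℂ] Lp ℂ 2 (volume : Measure ℝ)))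
    (hTk : ∀ (k : ℤ) (f : Lp ℂ 2 (volume : Measure ℝ)),
      (Tk k f : ℝ → ℂ) =ᵐ[volume] Atrans a b (k : ℝ) (f : ℝ → ℂ))
    (V : Submodule ℂ (Lp ℂ 2 (volume : Measure ℝ)))
    (hV : V = (Submodule.span ℂ (Set.range fun k : ℤ => Tk k φ)).topologicalClosure)
    (hframe : ∃ m M : ℝ, 0 < m ∧ 0 < M ∧ ∀ f ∈ V,
      m * ‖f‖ ^ 2 ≤ (∑' k : ℤ, ‖(inner ℂ (Tk k φ) f : ℂ)‖ ^ 2) ∧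
      (∑' k : ℤ, ‖(inner ℂ (Tk k φ) f : ℂ)‖ ^ 2) ≤ M * ‖f‖ ^ 2)
    (S Sinv : Lp ℂ 2 (volume : Measure ℝ) →L[ℂ] Lp ℂ 2 (volume : Measure ℝ))
    (hS : ∀ f, S f = ∑' k : ℤ, (inner ℂ (Tk k φ) f : ℂ) • Tk k φ)
    (hSV : ∀ f ∈ V, S f ∈ V) (hSinvV : ∀ f ∈ V, Sinv f ∈ V)
    (hSinvS : ∀ f ∈ V, Sinv (S f) = f) (hSSinv : ∀ f ∈ V, S (Sinv f) = f) :
    (∀ k : ℤ, ∀ f ∈ V, S (Tk k f) = Tk k (S f)) ∧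
      (∀ k : ℤ, Sinv (Tk k φ) = Tk k (Sinv φ)) := by
  classical
  set cph : ℤ → ℤ → ℂ := fun k m =>
    Complex.exp (-Complex.I * ((a : ℂ) / b) * ((k : ℝ) : ℂ) * ((m : ℝ) : ℂ)) with hcph
  have hcph_ne : ∀ k m, cph k m ≠ 0 := fun k m => Complex.exp_ne_zero _
  have hcph_conj : ∀ k m, (starRingEnd ℂ) (cph k m) * cph k m = 1 := by
    intro k m
    exact conj_phase_mul_self _ (conj_phase a b _ _ (Complex.conj_ofReal _)
      (Complex.conj_ofReal _))
  -- `Tk 0` is the identity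
  have hT0 : ∀ f, Tk 0 f = f := by
    intro f
    refine Lp.ext ((hTk 0 f).trans ?_)
    filter_upwards with t
    simp [Atrans]
  -- composition law for the operators
  have hTT : ∀ (k m : ℤ) (f : Lp ℂ 2 (volume : Measure ℝ)),
      Tk k (Tk m f) = cph k m • Tk (k + m) f := by
    intro k m f
    refine Lp.ext ?_
    have h2 : Atrans a b (k : ℝ) (Tk m f) =ᵐ[volume] Atrans a b (k : ℝ) (Atrans a b (m : ℝ) f) :=
      Atrans_congr_ae a b _ (hTk m f)
    have h3 := Lp.coeFn_smul (cph k m) (Tk (k + m) f)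
    refine ((hTk k (Tk m f)).trans h2).trans (.trans ?_ h3.symm)
    filter_upwards [hTk (k + m) f] with t ht
    rw [Atrans_comp]
    simp only [Pi.smul_apply, smul_eq_mul, hcph]
    rw [show ((k : ℝ) + (m : ℝ)) = (((k + m : ℤ) : ℝ)) by push_cast; ring, ht]
  -- each `Tk k` preserves inner products
  have hiso : ∀ (k : ℤ) (u v : Lp ℂ 2 (volume : Measure ℝ)),
      (inner ℂ (Tk k u) (Tk k v) : ℂ) = inner ℂ u v := by
    intro k u v
    rw [L2.inner_def, L2.inner_def]
    have hcongr : ∫ t : ℝ, (inner ℂ ((Tk k u) t) ((Tk k v) t) : ℂ)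
        = ∫ t : ℝ, (inner ℂ (Atrans a b (k : ℝ) u t) (Atrans a b (k : ℝ) v t) : ℂ) := by
      refine integral_congr_ae ?_
      filter_upwards [hTk k u, hTk k v] with t h1 h2
      rw [h1, h2]
    rw [hcongr]
    have hpt : ∀ t : ℝ, (inner ℂ (Atrans a b (k : ℝ) u t) (Atrans a b (k : ℝ) v t) : ℂ)
        = (fun s : ℝ => (inner ℂ (u s) (v s) : ℂ)) (t - (k : ℝ)) := by
      intro t
      simp only [Atrans, RCLike.inner_apply, map_mul]
      have h1 := conj_phase_mul_self (-Complex.I * ((a : ℂ) / b) * ((k : ℝ) : ℂ) * ((t : ℂ) - ((k : ℝ) : ℂ)))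
        (conj_phase a b _ _ (Complex.conj_ofReal _) (by
          simp only [map_sub, Complex.conj_ofReal]))
      rw [mul_comm _ ((starRingEnd ℂ) (Complex.exp _) * _), mul_comm (v _)]
      calc (starRingEnd ℂ) (Complex.exp (-Complex.I * ((a : ℂ) / b) * ((k : ℝ) : ℂ) * ((t : ℂ) - ((k : ℝ) : ℂ))))
            * (starRingEnd ℂ) (u (t - (k : ℝ)))
            * (Complex.exp (-Complex.I * ((a : ℂ) / b) * ((k : ℝ) : ℂ) * ((t : ℂ) - ((k : ℝ) : ℂ)))
              * v (t - (k : ℝ)))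
          = ((starRingEnd ℂ) (Complex.exp (-Complex.I * ((a : ℂ) / b) * ((k : ℝ) : ℂ) * ((t : ℂ) - ((k : ℝ) : ℂ))))
            * Complex.exp (-Complex.I * ((a : ℂ) / b) * ((k : ℝ) : ℂ) * ((t : ℂ) - ((k : ℝ) : ℂ))))
            * ((starRingEnd ℂ) (u (t - (k : ℝ))) * v (t - (k : ℝ))) := by ring
        _ = (starRingEnd ℂ) (u (t - (k : ℝ))) * v (t - (k : ℝ)) := by rw [h1, one_mul]
    simp only [hpt]
    exact integral_sub_right_eq_self (fun s : ℝ => (inner ℂ (u s) (v s) : ℂ)) (k : ℝ)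
  -- commutation of `S` with `Tk k`
  have hcomm : ∀ (k : ℤ) (f : Lp ℂ 2 (volume : Measure ℝ)), S (Tk k f) = Tk k (S f) := by
    intro k f
    have hsummand : ∀ j : ℤ,
        (inner ℂ (Tk j φ) (Tk k f) : ℂ) • Tk j φ
          = Tk k ((inner ℂ (Tk (j - k) φ) f : ℂ) • Tk (j - k) φ) := by
      intro j
      have e1 : Tk k (Tk (j - k) φ) = cph k (j - k) • Tk j φ := by
        rw [hTT k (j - k) φ, show k + (j - k) = j by ring]
      have e2 : (inner ℂ (Tk (j - k) φ) f : ℂ)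
          = (starRingEnd ℂ) (cph k (j - k)) * inner ℂ (Tk j φ) (Tk k f) := by
        rw [← hiso k, e1, inner_smul_left]
      rw [_root_.map_smul, e1, e2, smul_smul]
      congr 1
      rw [mul_comm ((starRingEnd ℂ) (cph k (j - k)) * _) (cph k (j - k)),
        ← mul_assoc, mul_comm (cph k (j - k)) _, hcph_conj, one_mul]
    calc S (Tk k f) = ∑' j : ℤ, (inner ℂ (Tk j φ) (Tk k f) : ℂ) • Tk j φ := hS _
      _ = ∑' j : ℤ, Tk k ((inner ℂ (Tk (j - k) φ) f : ℂ) • Tk (j - k) φ) := tsum_congr hsummand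
      _ = ∑' m : ℤ, Tk k ((inner ℂ (Tk m φ) f : ℂ) • Tk m φ) := by
          exact (Equiv.subRight k).tsum_eq fun m => Tk k ((inner ℂ (Tk m φ) f : ℂ) • Tk m φ)
      _ = Tk k (∑' m : ℤ, (inner ℂ (Tk m φ) f : ℂ) • Tk m φ) := by
          by_cases hsum : Summable (fun m : ℤ => (inner ℂ (Tk m φ) f : ℂ) • Tk m φ)
          · exact ((Tk k).map_tsum hsum).symm
          · have h2 : ¬ Summable (fun m : ℤ => Tk k ((inner ℂ (Tk m φ) f : ℂ) • Tk m φ)) := by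
              intro h
              apply hsum
              have h3 := h.mapL (Tk (-k))
              have h4 : ∀ m : ℤ, Tk (-k) (Tk k ((inner ℂ (Tk m φ) f : ℂ) • Tk m φ))
                  = cph (-k) k • ((inner ℂ (Tk m φ) f : ℂ) • Tk m φ) := by
                intro m
                rw [hTT, show (-k + k) = 0 by ring, hT0]
              simp only [h4] at h3
              have h5 := h3.const_smul (cph (-k) k)⁻¹
              simpa [inv_smul_smul₀ (hcph_ne (-k) k)] using h5
            rw [tsum_eq_zero_of_not_summable hsum, tsum_eq_zero_of_not_summable h2, map_zero]
      _ = Tk k (S f) := by rw [hS]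
  -- φ belongs to V
  have hφV : φ ∈ V := by
    rw [hV]
    have : Tk 0 φ ∈ Submodule.span ℂ (Set.range fun k : ℤ => Tk k φ) :=
      Submodule.subset_span ⟨0, rfl⟩
    rw [hT0] at this
    exact Submodule.le_topologicalClosure _ this
  -- Tk k maps V to V
  have hTkV : ∀ (k : ℤ), ∀ f ∈ V, Tk k f ∈ V := by
    intro k f hf
    rw [hV] at hf ⊢
    set W := Submodule.span ℂ (Set.range fun k : ℤ => Tk k φ) with hW
    have hstep : ∀ g ∈ W, Tk k g ∈ W := by
      intro g hg
      refine Submodule.span_induction ?_ ?_ ?_ ?_ hg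
      · rintro x ⟨j, rfl⟩
        rw [hTT]
        exact Submodule.smul_mem _ _ (Submodule.subset_span ⟨k + j, rfl⟩)
      · simp
      · intro x y _ _ hx hy
        rw [map_add]; exact Submodule.add_mem _ hx hy
      · intro c x _ hx
        rw [_root_.map_smul]; exact Submodule.smul_mem _ _ hx
    have hf' : f ∈ closure (W : Set (Lp ℂ 2 (volume : Measure ℝ))) := by
      rwa [← Submodule.topologicalClosure_coe]
    have : Tk k f ∈ closure (W : Set (Lp ℂ 2 (volume : Measure ℝ))) :=
      map_mem_closure (Tk k).continuous hf' fun x hx => hstep x hx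
    rwa [← Submodule.topologicalClosure_coe] at this
  refine ⟨fun k f _ => hcomm k f, fun k => ?_⟩
  have h1 : Sinv φ ∈ V := hSinvV φ hφV
  have h2 : Tk k (Sinv φ) ∈ V := hTkV k _ h1
  have h3 : S (Tk k (Sinv φ)) = Tk k φ := by
    rw [hcomm k (Sinv φ), hSSinv φ hφV]
  calc Sinv (Tk k φ) = Sinv (S (Tk k (Sinv φ))) := by rw [h3]
    _ = Tk k (Sinv φ) := hSinvS _ h2
end
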